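/- Fix $t \in (0,1)$ and $p > 1$. The function $x \mapsto x^{1-p}\varphi(x,t)^p + (1-x)^{1-p}(1 - \varphi(x,t))^p$ is strictly decreasing on $(0, 1-t)$, where $\varphi(x,t) = (\sqrt{x(1-t)} + \sqrt{t(1-x)})^2$. -/

import Mathlib

set_option maxHeartbeats 1000000


lemma key_ineq (p q : ℝ) (hp : 1 < p) (hq : 0 < q) (hpq : 0 < 1 + (1-p)*q) :
    (1+q) ^ (2*p-1) * (1 + (1-p)*q) < 1 + p*q := by
  set g : ℝ → ℝ := fun y => Real.log (1+p*y) - Real.log (1+(1-p)*y) - (2*p-1) * Real.log (1+y) with hg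
  have hpos : ∀ y ∈ Set.Icc (0:ℝ) q, 0 < 1+p*y ∧ 0 < 1+(1-p)*y ∧ 0 < 1+y := by
    intro y hy
    obtain ⟨hy0, hyq⟩ := hy
    refine ⟨by nlinarith, ?_, by linarith⟩
    nlinarith [mul_le_mul_of_nonpos_left hyq (show 1-p ≤ 0 by linarith)]
  have hderiv : ∀ y ∈ Set.Icc (0:ℝ) q, HasDerivAt g
      (p/(1+p*y) - (1-p)/(1+(1-p)*y) - (2*p-1) * (1/(1+y))) y := by
    intro y hy
    obtain ⟨h1, h2, h3⟩ := hpos y hy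
    have d1 : HasDerivAt (fun y : ℝ => Real.log (1+p*y)) ((1/(1+p*y)) * p) y := by
      have := (Real.hasDerivAt_log h1.ne').comp y
        (((hasDerivAt_id y).const_mul p).const_add 1)
      exact this.congr_deriv (by ring)
    have d2 : HasDerivAt (fun y : ℝ => Real.log (1+(1-p)*y)) ((1/(1+(1-p)*y)) * (1-p)) y := by
      have := (Real.hasDerivAt_log h2.ne').comp y
        (((hasDerivAt_id y).const_mul (1-p)).const_add 1)
      exact this.congr_deriv (by ring)
    have d3 : HasDerivAt (fun y : ℝ => Real.log (1+y)) ((1/(1+y)) * 1) y := by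
      have := (Real.hasDerivAt_log h3.ne').comp y ((hasDerivAt_id y).const_add 1)
      exact this.congr_deriv (by ring)
    have := (d1.sub d2).sub ((d3.const_mul (2*p-1)))
    exact this.congr_deriv (by ring)
  have hmono : StrictMonoOn g (Set.Icc 0 q) := by
    apply strictMonoOn_of_deriv_pos (convex_Icc 0 q)
    · exact fun y hy => (hderiv y hy).continuousAt.continuousWithinAt
    · intro y hy
      rw [interior_Icc] at hy
      have hy' : y ∈ Set.Icc (0:ℝ) q := ⟨hy.1.le, hy.2.le⟩
      obtain ⟨h1, h2, h3⟩ := hpos y hy'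
      rw [(hderiv y hy').deriv]
      have key : (p/(1+p*y) - (1-p)/(1+(1-p)*y) - (2*p-1) * (1/(1+y)))
          * ((1+p*y)*(1+(1-p)*y)*(1+y)) = p*(p-1)*(2*p-1)*y^2 := by
        have h2' : 1 + y*(1-p) ≠ 0 := by nlinarith
        field_simp
        ring
      have h4 : 0 < p*(p-1)*(2*p-1)*y^2 := by
        have hy0 := hy.1
        have h5 : 0 < p*(p-1)*(2*p-1) :=
          mul_pos (mul_pos (by linarith) (by linarith)) (by linarith)
        positivity
      nlinarith [mul_pos (mul_pos h1 h2) h3]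
  have h0 : g 0 = 0 := by simp [hg]
  have hgq : 0 < g q := by
    have := hmono (Set.left_mem_Icc.2 hq.le) (Set.right_mem_Icc.2 hq.le) hq
    rwa [h0] at this
  obtain ⟨h1, h2, h3⟩ := hpos q (Set.right_mem_Icc.2 hq.le)
  have : (2*p-1) * Real.log (1+q) + Real.log (1+(1-p)*q) < Real.log (1+p*q) := by
    simp only [hg] at hgq; linarith
  have := Real.exp_lt_exp.2 this
  rw [Real.exp_add, Real.exp_log h1, Real.exp_log h2] at this
  rwa [Real.rpow_def_of_pos h3, mul_comm (Real.log (1+q))]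

lemma sign_lem (p A B c S C : ℝ) (hp : 1 < p) (hA : 0 < A) (hB : 0 < B)
    (hc : 0 < c) (hS : 0 < S) (hC : 0 < C) (hrel : S*B = C*A + c) :
    (S/A) ^ (2*p-1) * (B*S - p*c) < (C/B) ^ (2*p-1) * (A*C + p*c) := by
  have hK : 0 < C*A := mul_pos hC hA
  set q : ℝ := c / (C*A) with hq
  have hq0 : 0 < q := div_pos hc hK
  have hSA : S/A = (1+q) * (C/B) := by
    rw [hq]
    field_simp
    nlinarith [hrel]
  have hRpos : 0 < (C/B) ^ (2*p-1) := Real.rpow_pos_of_pos (div_pos hC hB) _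
  rcases le_or_gt (B*S - p*c) 0 with h | h
  · have hL : (S/A) ^ (2*p-1) * (B*S - p*c) ≤ 0 :=
      mul_nonpos_of_nonneg_of_nonpos (Real.rpow_pos_of_pos (div_pos hS hA) _).le h
    have hR : 0 < (C/B) ^ (2*p-1) * (A*C + p*c) :=
      mul_pos hRpos (by nlinarith)
    linarith
  · have hpq : 0 < 1 + (1-p)*q := by
      have : B*S - p*c = (C*A) * (1 + (1-p)*q) := by
        rw [hq]; field_simp; linarith [hrel]
      nlinarith [this, h]
    have hkey := key_ineq p q hp hq0 hpq
    have e1 : (S/A) ^ (2*p-1) = (1+q) ^ (2*p-1) * (C/B) ^ (2*p-1) := by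
      rw [hSA, Real.mul_rpow (by linarith) (div_pos hC hB).le]
    have e2 : B*S - p*c = (C*A) * (1 + (1-p)*q) := by
      rw [hq]; field_simp; linarith [hrel]
    have e3 : A*C + p*c = (C*A) * (1 + p*q) := by
      rw [hq]; field_simp
    rw [e1, e2, e3]
    calc (1+q)^(2*p-1) * (C/B)^(2*p-1) * (C*A * (1+(1-p)*q))
        = (C/B)^(2*p-1) * (C*A) * ((1+q)^(2*p-1) * (1+(1-p)*q)) := by ring
      _ < (C/B)^(2*p-1) * (C*A) * (1+p*q) :=
          mul_lt_mul_of_pos_left hkey (mul_pos hRpos hK)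
      _ = (C/B)^(2*p-1) * (C*A * (1+p*q)) := by ring

lemma sq_rpow18 (X : ℝ) (hX : 0 < X) (e : ℝ) : (X^2 : ℝ) ^ e = X ^ (2*e) := by
  rw [← Real.rpow_natCast X 2, ← Real.rpow_mul hX.le]
  norm_num

lemma ratio_helper18 (S A : ℝ) (hS : 0 < S) (hA : 0 < A) (p : ℝ) :
    (S/A) ^ (2*p-1) = (S^(2*p)*A)/(S*A^(2*p)) := by
  rw [Real.div_rpow hS.le hA.le, Real.rpow_sub hS, Real.rpow_sub hA,
    Real.rpow_one, Real.rpow_one]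
  have h1 := (Real.rpow_pos_of_pos hS (2*p)).ne'
  have h2 := (Real.rpow_pos_of_pos hA (2*p)).ne'
  field_simp

lemma deriv_neg18 (t p : ℝ) (ht0 : 0 < t) (ht1 : t < 1) (hp : 1 < p) {x : ℝ}
    (hx : x ∈ Set.Ioo (0:ℝ) (1-t)) :
    ∃ v, v < 0 ∧ HasDerivAt (fun x : ℝ =>
      x ^ (1 - p) * ((Real.sqrt (x * (1 - t)) + Real.sqrt (t * (1 - x))) ^ 2) ^ p
        + (1 - x) ^ (1 - p) * (1 - (Real.sqrt (x * (1 - t)) + Real.sqrt (t * (1 - x))) ^ 2) ^ p) v x := by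
  obtain ⟨hx0, hx1t⟩ := hx
  have h1t : 0 < 1 - t := by linarith
  have h1x : 0 < 1 - x := by linarith
  have hu : 0 < x * (1-t) := mul_pos hx0 h1t
  have hw : 0 < t * (1-x) := mul_pos ht0 h1x
  -- square-root variables
  set A := Real.sqrt x with hAdef
  set B := Real.sqrt (1-x) with hBdef
  set c := Real.sqrt t with hcdef
  set d := Real.sqrt (1-t) with hddef
  have hA : 0 < A := Real.sqrt_pos.2 hx0
  have hB : 0 < B := Real.sqrt_pos.2 h1x
  have hc : 0 < c := Real.sqrt_pos.2 ht0
  have hd : 0 < d := Real.sqrt_pos.2 h1t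
  have hA2 : A^2 = x := Real.sq_sqrt hx0.le
  have hB2 : B^2 = 1-x := Real.sq_sqrt h1x.le
  have hc2 : c^2 = t := Real.sq_sqrt ht0.le
  have hd2 : d^2 = 1-t := Real.sq_sqrt h1t.le
  have hs1 : Real.sqrt (x*(1-t)) = A*d := Real.sqrt_mul hx0.le _
  have hs2 : Real.sqrt (t*(1-x)) = c*B := Real.sqrt_mul ht0.le _
  set S := A*d + c*B with hSdef
  set C := B*d - A*c with hCdef
  have hS : 0 < S := by positivity
  have hC : 0 < C := by
    have hAd : A < d := by
      apply Real.sqrt_lt_sqrt hx0.le hx1t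
    have hcB : c < B := by
      apply Real.sqrt_lt_sqrt ht0.le (by linarith)
    rw [hCdef]
    have h1 : A*c < d*c := mul_lt_mul_of_pos_right hAd hc
    have h2 : c*d < B*d := mul_lt_mul_of_pos_right hcB hd
    nlinarith
  have hSx : Real.sqrt (x*(1-t)) + Real.sqrt (t*(1-x)) = S := by rw [hs1, hs2]
  have hAB1 : A^2 + B^2 = 1 := by rw [hA2, hB2]; ring
  have hC2 : 1 - S^2 = C^2 := by
    rw [hSdef, hCdef]
    linear_combination (-(c^2+d^2))*hA2 + (-(c^2+d^2))*hB2 - hc2 - hd2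
  have hrel : S*B - C*A = c := by
    rw [hSdef, hCdef]
    linear_combination c*hAB1
  have hSne : Real.sqrt (x*(1-t)) + Real.sqrt (t*(1-x)) ≠ 0 := by rw [hSx]; exact hS.ne'
  have hphi_ne : (Real.sqrt (x*(1-t)) + Real.sqrt (t*(1-x)))^2 ≠ 0 := pow_ne_zero _ hSne
  have hone_ne : 1 - (Real.sqrt (x*(1-t)) + Real.sqrt (t*(1-x)))^2 ≠ 0 := by
    rw [hSx, hC2]; positivity
  -- derivative construction
  have hs1d : HasDerivAt (fun y : ℝ => Real.sqrt (y*(1-t)))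
      ((1*(1-t))/(2*Real.sqrt (x*(1-t)))) x :=
    ((hasDerivAt_id x).mul_const (1-t)).sqrt hu.ne'
  have hs2d : HasDerivAt (fun y : ℝ => Real.sqrt (t*(1-y)))
      ((t * -1)/(2*Real.sqrt (t*(1-x)))) x :=
    (((hasDerivAt_id x).const_sub 1).const_mul t).sqrt hw.ne'
  have hSd := hs1d.add hs2d
  have hphid := hSd.pow 2
  have hphip := hphid.rpow_const (p := p) (Or.inl hphi_ne)
  have honed := hphid.const_sub 1
  have honep := honed.rpow_const (p := p) (Or.inl hone_ne)
  have hxp : HasDerivAt (fun y : ℝ => y ^ (1-p)) ((1-p) * x ^ (1-p-1)) x :=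
    Real.hasDerivAt_rpow_const (Or.inl hx0.ne')
  have h1xp := ((hasDerivAt_id x).const_sub 1).rpow_const (p := 1-p) (Or.inl h1x.ne')
  have htot := (hxp.mul hphip).add (h1xp.mul honep)
  refine ⟨_, ?_, htot⟩
  have hD : 1 * (1 - t) / (2 * Real.sqrt (x * (1 - t))) + t * -1 / (2 * Real.sqrt (t * (1 - x)))
      = C/(2*(A*B)) := by
    rw [hs1, hs2, ← hd2, ← hc2, hCdef]
    field_simp
    ring
  simp only [id_eq, Pi.add_apply, Pi.pow_apply]
  rw [hD, hSx, hC2]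
  rw [show (1:ℝ) - x = B^2 from hB2.symm, show x = A^2 from hA2.symm]
  simp only [sq_rpow18 A hA, sq_rpow18 B hB, sq_rpow18 S hS, sq_rpow18 C hC]
  have eA1 : A ^ (2*(1-p-1)) = (A^(2*p))⁻¹ := by
    rw [show 2*(1-p-1) = -(2*p) by ring, Real.rpow_neg hA.le]
  have eB1 : B ^ (2*(1-p-1)) = (B^(2*p))⁻¹ := by
    rw [show 2*(1-p-1) = -(2*p) by ring, Real.rpow_neg hB.le]
  have eA2 : A ^ (2*(1-p)) = A^2 / A^(2*p) := by
    rw [show 2*(1-p) = ((2:ℕ):ℝ) - 2*p by push_cast; ring, Real.rpow_sub hA, Real.rpow_natCast]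
  have eB2 : B ^ (2*(1-p)) = B^2 / B^(2*p) := by
    rw [show 2*(1-p) = ((2:ℕ):ℝ) - 2*p by push_cast; ring, Real.rpow_sub hB, Real.rpow_natCast]
  have eS2 : S ^ (2*(p-1)) = S^(2*p) / S^2 := by
    rw [show 2*(p-1) = 2*p - ((2:ℕ):ℝ) by push_cast; ring, Real.rpow_sub hS, Real.rpow_natCast]
  have eC2 : C ^ (2*(p-1)) = C^(2*p) / C^2 := by
    rw [show 2*(p-1) = 2*p - ((2:ℕ):ℝ) by push_cast; ring, Real.rpow_sub hC, Real.rpow_natCast]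
  rw [eA1, eB1, eA2, eB2, eS2, eC2]
  have hT : (S/A)^(2*p-1)*(B*S - p*c) - (C/B)^(2*p-1)*(A*C + p*c) < 0 := by
    have := sign_lem p A B c S C hp hA hB hc hS hC (by linarith [hrel])
    linarith
  have hABpos : (0:ℝ) < A*B := mul_pos hA hB
  have hdiv := div_neg_of_neg_of_pos hT hABpos
  refine lt_of_eq_of_lt ?_ hdiv
  rw [ratio_helper18 S A hS hA, ratio_helper18 C B hC hB, ← hrel]
  have hane := (Real.rpow_pos_of_pos hA (2*p)).ne'
  have hbne := (Real.rpow_pos_of_pos hB (2*p)).ne'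
  have hsne := (Real.rpow_pos_of_pos hS (2*p)).ne'
  have hcne := (Real.rpow_pos_of_pos hC (2*p)).ne'
  push_cast
  field_simp
  ring


theorem stmt_18 (t p : ℝ) (ht : t ∈ Set.Ioo (0 : ℝ) 1) (hp : 1 < p) :
    StrictAntiOn (fun x : ℝ =>
      x ^ (1 - p) * ((Real.sqrt (x * (1 - t)) + Real.sqrt (t * (1 - x))) ^ 2) ^ p
        + (1 - x) ^ (1 - p) * (1 - (Real.sqrt (x * (1 - t)) + Real.sqrt (t * (1 - x))) ^ 2) ^ p)
      (Set.Ioo 0 (1 - t)) := by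
  obtain ⟨ht0, ht1⟩ := ht
  apply strictAntiOn_of_deriv_neg (convex_Ioo 0 (1-t))
  · intro x hx
    obtain ⟨v, _, hd⟩ := deriv_neg18 t p ht0 ht1 hp hx
    exact hd.continuousAt.continuousWithinAt
  · intro x hx
    rw [interior_Ioo] at hx
    obtain ⟨v, hv, hd⟩ := deriv_neg18 t p ht0 ht1 hp hx
    rw [hd.deriv]
    exact hv
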